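/- arXiv:1910.13653 — 2 statements merged into one kernel-verified Lean document; each statement's English description precedes it below -/
import Mathlib

section
/- For every entire function f : ℂ × ℂ → ℂ there exists an entire function g : ℂ × ℂ → ℂ such that D₀g(z) = f(z) for every z ∈ ℂ × ℂ. -/
open Complex Metric MeasureTheory ContinuousLinearMap

/-- The 0th complex partial derivative of a function on `ℂ × ℂ`. -/
noncomputable def D0 (f : ℂ × ℂ → ℂ) (z : ℂ × ℂ) : ℂ :=
  fderiv ℂ f z (1, 0)

section Auxiliary

open Complex Metric MeasureTheory ContinuousLinearMap

lemma slice0 {f : ℂ × ℂ → ℂ} (hf : Differentiable ℂ f) (z : ℂ × ℂ) :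
    HasDerivAt (fun u => f (u, z.2)) (fderiv ℂ f z (1, 0)) z.1 := by
  have h : HasDerivAt (fun u : ℂ => (u, z.2)) ((1 : ℂ), (0 : ℂ)) z.1 :=
    HasDerivAt.prodMk (hasDerivAt_id z.1) (hasDerivAt_const _ _)
  have := (hf z).hasFDerivAt.comp_hasDerivAt z.1 h
  simpa [Function.comp_def] using this

lemma slice1 {f : ℂ × ℂ → ℂ} (hf : Differentiable ℂ f) (z : ℂ × ℂ) :
    HasDerivAt (fun v => f (z.1, v)) (fderiv ℂ f z (0, 1)) z.2 := by
  have h : HasDerivAt (fun v : ℂ => (z.1, v)) ((0 : ℂ), (1 : ℂ)) z.2 :=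
    HasDerivAt.prodMk (hasDerivAt_const _ _) (hasDerivAt_id z.2)
  have := (hf z).hasFDerivAt.comp_hasDerivAt z.2 h
  simpa [Function.comp_def] using this

lemma opnorm_le {A : (ℂ × ℂ) →L[ℂ] ℂ} : ‖A‖ ≤ ‖A (1,0)‖ + ‖A (0,1)‖ := by
  apply ContinuousLinearMap.opNorm_le_bound _ (by positivity)
  intro x
  have hx : x = x.1 • ((1:ℂ), (0:ℂ)) + x.2 • ((0:ℂ), (1:ℂ)) := by
    simp [Prod.ext_iff]
  calc ‖A x‖ = ‖x.1 • A (1,0) + x.2 • A (0,1)‖ := by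
        conv_lhs => rw [hx]
        rw [map_add, A.map_smul, A.map_smul]
    _ ≤ ‖x.1‖ * ‖A (1,0)‖ + ‖x.2‖ * ‖A (0,1)‖ := by
        refine (norm_add_le _ _).trans ?_; simp [norm_smul]
    _ ≤ ‖x‖ * ‖A (1,0)‖ + ‖x‖ * ‖A (0,1)‖ := by
        gcongr
        · exact norm_fst_le x
        · exact norm_snd_le x
    _ = (‖A (1,0)‖ + ‖A (0,1)‖) * ‖x‖ := by ring

lemma fderiv_bdd {f : ℂ × ℂ → ℂ} (hf : Differentiable ℂ f) {K : Set (ℂ × ℂ)}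
    (hK : IsCompact K) : ∃ M : ℝ, 0 ≤ M ∧ ∀ z ∈ K, ‖fderiv ℂ f z‖ ≤ M ∧ ‖f z‖ ≤ M := by
  obtain ⟨C, hC⟩ := (hK.cthickening (r := 1)).exists_bound_of_continuousOn
    (hf.continuous.continuousOn)
  have key : ∀ z ∈ K, ‖fderiv ℂ f z (1,0)‖ ≤ C ∧ ‖fderiv ℂ f z (0,1)‖ ≤ C ∧ ‖f z‖ ≤ C := by
    intro z hz
    have hmem : ∀ w : ℂ × ℂ, dist w z ≤ 1 → ‖f w‖ ≤ C := fun w hw =>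
      hC w (Metric.mem_cthickening_of_dist_le w z 1 K hz hw)
    refine ⟨?_, ?_, hC z (Metric.self_subset_cthickening K hz)⟩
    · have hd : DiffContOnCl ℂ (fun u => f (u, z.2)) (ball z.1 1) :=
        Differentiable.diffContOnCl (fun u => ((hf (u, z.2)).comp u
          (DifferentiableAt.prodMk differentiableAt_id (differentiableAt_const _))))
      have := Complex.norm_deriv_le_of_forall_mem_sphere_norm_le one_pos hd
        (C := C) (fun u hu => hmem (u, z.2) (by
          rw [Prod.dist_eq]
          simp only [dist_self]
          simp only [mem_sphere_iff_norm] at hu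
          simp [dist_eq_norm, hu]))
      rwa [(slice0 hf z).deriv, div_one] at this
    · have hd : DiffContOnCl ℂ (fun v => f (z.1, v)) (ball z.2 1) :=
        Differentiable.diffContOnCl (fun v => ((hf (z.1, v)).comp v
          (DifferentiableAt.prodMk (differentiableAt_const _) differentiableAt_id)))
      have := Complex.norm_deriv_le_of_forall_mem_sphere_norm_le one_pos hd
        (C := C) (fun v hv => hmem (z.1, v) (by
          rw [Prod.dist_eq]
          simp only [dist_self]
          simp only [mem_sphere_iff_norm] at hv
          simp [dist_eq_norm, hv]))
      rwa [(slice1 hf z).deriv, div_one] at this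
  have habs : C ≤ |C| := le_abs_self C
  refine ⟨3 * |C|, by positivity, fun z hz => ⟨?_, ?_⟩⟩
  · refine opnorm_le.trans ?_
    have h := key z hz
    have : |C| ≥ 0 := abs_nonneg C
    linarith [h.1, h.2.1]
  · have := (key z hz).2.2
    have : |C| ≥ 0 := abs_nonneg C
    linarith [(key z hz).2.2]

noncomputable def Lmap (t : ℝ) : (ℂ × ℂ) →L[ℂ] ℂ × ℂ :=
  (((t:ℂ)) • fst ℂ ℂ ℂ).prod (snd ℂ ℂ ℂ)

lemma Lmap_apply (t : ℝ) (x : ℂ × ℂ) : Lmap t x = ((t:ℂ) * x.1, x.2) := by simp [Lmap]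

lemma Lmap_continuous : Continuous Lmap := by
  have : Lmap = fun t : ℝ => (ContinuousLinearMap.prodₗᵢ (E := ℂ × ℂ) (F := ℂ) (G := ℂ) ℂ)
      (((t:ℂ)) • fst ℂ ℂ ℂ, snd ℂ ℂ ℂ) := rfl
  rw [this]
  exact (ContinuousLinearMap.prodₗᵢ (E := ℂ × ℂ) (F := ℂ) (G := ℂ) ℂ).continuous.comp
    ((Complex.continuous_ofReal.smul continuous_const).prodMk continuous_const)

lemma Lmap_norm_le {t : ℝ} (ht : t ∈ Set.Icc (0:ℝ) 1) : ‖Lmap t‖ ≤ 1 := by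
  apply ContinuousLinearMap.opNorm_le_bound _ zero_le_one
  intro x
  rw [one_mul, Lmap_apply, Prod.norm_def, Prod.norm_def]
  apply max_le
  · calc ‖(t:ℂ) * x.1‖ = |t| * ‖x.1‖ := by simp [norm_mul]
      _ ≤ 1 * ‖x.1‖ := by gcongr; rw [abs_le]; constructor <;> linarith [ht.1, ht.2]
      _ ≤ max ‖x.1‖ ‖x.2‖ := by simp [le_max_left]
  · exact le_max_right _ _

lemma norm_fstL_le : ‖fst ℂ ℂ ℂ‖ ≤ 1 :=
  ContinuousLinearMap.opNorm_le_bound _ zero_le_one (fun x => by simpa using norm_fst_le x)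

noncomputable def Fp (f : ℂ × ℂ → ℂ) (x : ℂ × ℂ) (t : ℝ) : ℂ := x.1 * f (Lmap t x)

noncomputable def Fp' (f : ℂ × ℂ → ℂ) (x : ℂ × ℂ) (t : ℝ) : (ℂ × ℂ) →L[ℂ] ℂ :=
  x.1 • ((fderiv ℂ f (Lmap t x)).comp (Lmap t)) + f (Lmap t x) • fst ℂ ℂ ℂ

lemma hasFDerivAt_Fp {f : ℂ × ℂ → ℂ} (hf : Differentiable ℂ f) (x : ℂ × ℂ) (t : ℝ) :
    HasFDerivAt (fun y => Fp f y t) (Fp' f x t) x := by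
  have h1 : HasFDerivAt (fun y : ℂ × ℂ => y.1) (fst ℂ ℂ ℂ) x := hasFDerivAt_fst
  have h2 : HasFDerivAt (fun y => f (Lmap t y)) ((fderiv ℂ f (Lmap t x)).comp (Lmap t)) x :=
    (hf (Lmap t x)).hasFDerivAt.comp x (Lmap t).hasFDerivAt
  exact h1.mul h2

lemma continuous_Fp {f : ℂ × ℂ → ℂ} (hf : Differentiable ℂ f) (x : ℂ × ℂ) :
    Continuous fun t => Fp f x t := by
  simp only [Fp, Lmap_apply]
  exact continuous_const.mul (hf.continuous.comp
    ((Complex.continuous_ofReal.mul continuous_const).prodMk continuous_const))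

lemma measurable_Fp' {f : ℂ × ℂ → ℂ} (hf : Differentiable ℂ f) (p : ℂ × ℂ) :
    Measurable fun t => Fp' f p t := by
  have mw : Continuous fun t : ℝ => Lmap t p := by
    simp only [Lmap_apply]
    exact (Complex.continuous_ofReal.mul continuous_const).prodMk continuous_const
  have m1 : Measurable fun t => fderiv ℂ f (Lmap t p) :=
    (measurable_fderiv ℂ f).comp mw.measurable
  have mcomp : Continuous fun q : ((ℂ × ℂ) →L[ℂ] ℂ) × ((ℂ × ℂ) →L[ℂ] ℂ × ℂ) =>
      q.1.comp q.2 := isBoundedBilinearMap_comp.continuous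
  have m2 : Measurable fun t => (fderiv ℂ f (Lmap t p)).comp (Lmap t) :=
    mcomp.measurable.comp (m1.prodMk Lmap_continuous.measurable)
  have m3 : Measurable fun t => p.1 • ((fderiv ℂ f (Lmap t p)).comp (Lmap t)) :=
    m2.const_smul p.1
  have m4 : Measurable fun t => f (Lmap t p) • fst ℂ ℂ ℂ :=
    ((hf.continuous.comp mw).smul continuous_const).measurable
  exact m3.add m4

lemma Fp'_bound {f : ℂ × ℂ → ℂ} (hf : Differentiable ℂ f) (p : ℂ × ℂ) :
    ∃ C : ℝ, ∀ t ∈ Set.Icc (0:ℝ) 1, ∀ x ∈ closedBall p 1, ‖Fp' f x t‖ ≤ C := by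
  set K : Set (ℂ × ℂ) :=
    (fun q : (ℂ × ℂ) × ℝ => Lmap q.2 q.1) '' (closedBall p 1 ×ˢ Set.Icc (0:ℝ) 1) with hKdef
  have hK : IsCompact K := by
    apply (isCompact_closedBall p 1).prod isCompact_Icc |>.image
    simp only [Lmap_apply]
    exact ((Complex.continuous_ofReal.comp continuous_snd).mul
      (continuous_fst.fst)).prodMk continuous_fst.snd
  obtain ⟨M, hM0, hM⟩ := fderiv_bdd hf hK
  refine ⟨(‖p‖ + 1) * M + M, fun t ht x hx => ?_⟩
  have hmem : Lmap t x ∈ K := ⟨(x, t), ⟨hx, ht⟩, rfl⟩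
  have hb := hM _ hmem
  have hxn : ‖x‖ ≤ ‖p‖ + 1 := by
    calc ‖x‖ ≤ ‖p‖ + dist x p := by rw [dist_eq_norm]; exact norm_le_insert' x p
      _ ≤ ‖p‖ + 1 := by linarith [mem_closedBall.mp hx]
  calc ‖Fp' f x t‖ ≤ ‖x.1 • ((fderiv ℂ f (Lmap t x)).comp (Lmap t))‖
        + ‖f (Lmap t x) • fst ℂ ℂ ℂ‖ := norm_add_le _ _
    _ = ‖x.1‖ * ‖(fderiv ℂ f (Lmap t x)).comp (Lmap t)‖
        + ‖f (Lmap t x)‖ * ‖fst ℂ ℂ ℂ‖ := by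
        rw [norm_smul x.1 ((fderiv ℂ f (Lmap t x)).comp (Lmap t)),
          norm_smul (f (Lmap t x)) (fst ℂ ℂ ℂ)]
    _ ≤ (‖p‖ + 1) * (M * 1) + M * 1 := by
        gcongr
        · exact (norm_fst_le x).trans hxn
        · exact ((fderiv ℂ f (Lmap t x)).opNorm_comp_le (Lmap t)).trans
            (by gcongr; exacts [hb.1, Lmap_norm_le ht])
        · exact hb.2
        · exact norm_fstL_le
    _ = (‖p‖ + 1) * M + M := by ring

lemma key {f : ℂ × ℂ → ℂ} (hf : Differentiable ℂ f) (p : ℂ × ℂ) :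
    HasFDerivAt (fun x => ∫ t in (0:ℝ)..1, Fp f x t) (∫ t in (0:ℝ)..1, Fp' f p t) p ∧
    IntervalIntegrable (fun t => Fp' f p t) volume 0 1 := by
  obtain ⟨C, hC⟩ := Fp'_bound hf p
  have hsub : Set.uIoc (0:ℝ) 1 ⊆ Set.Icc (0:ℝ) 1 := by
    rw [Set.uIoc_of_le zero_le_one]; exact Set.Ioc_subset_Icc_self
  have hmeas : AEStronglyMeasurable (fun t => Fp' f p t)
      (volume.restrict (Set.uIoc (0:ℝ) 1)) :=
    (measurable_Fp' hf p).aestronglyMeasurable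
  have hboundae : ∀ᵐ t ∂volume, t ∈ Set.uIoc (0:ℝ) 1 →
      ∀ x ∈ ball p 1, ‖Fp' f x t‖ ≤ C :=
    Filter.Eventually.of_forall fun t ht x hx =>
      hC t (hsub ht) x (ball_subset_closedBall hx)
  have hint : IntervalIntegrable (fun t => Fp' f p t) volume 0 1 := by
    apply IntervalIntegrable.mono_fun' (g := fun _ => C) intervalIntegrable_const hmeas
    have : ∀ᵐ t ∂volume.restrict (Set.uIoc (0:ℝ) 1), ‖Fp' f p t‖ ≤ C := by
      rw [ae_restrict_iff' measurableSet_uIoc]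
      exact Filter.Eventually.of_forall fun t ht =>
        hC t (hsub ht) p (mem_closedBall_self zero_le_one)
    exact this
  refine ⟨?_, hint⟩
  apply intervalIntegral.hasFDerivAt_integral_of_dominated_of_fderiv_le
    (s := ball p 1) (bound := fun _ => C) (ball_mem_nhds p one_pos)
  · exact Filter.Eventually.of_forall fun x => (continuous_Fp hf x).aestronglyMeasurable
  · exact (continuous_Fp hf p).intervalIntegrable 0 1
  · exact hmeas
  · exact hboundae
  · exact intervalIntegrable_const
  · exact Filter.Eventually.of_forall fun t _ x _ => hasFDerivAt_Fp hf x t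

lemma phi_deriv {f : ℂ × ℂ → ℂ} (hf : Differentiable ℂ f) (p : ℂ × ℂ) (t : ℝ) :
    HasDerivAt (fun s : ℝ => (s:ℂ) * f (Lmap s p)) (Fp' f p t ((1:ℂ), (0:ℂ))) t := by
  have hc : HasDerivAt (fun s : ℝ => (s:ℂ)) 1 t := by
    simpa [Function.comp_def] using (hasDerivAt_id t).ofReal_comp
  have hw : HasDerivAt (fun s : ℝ => Lmap s p) ((p.1, 0) : ℂ × ℂ) t := by
    simp only [Lmap_apply]
    have := HasDerivAt.prodMk (hc.mul_const p.1) (hasDerivAt_const t p.2)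
    simpa using this
  have hfw : HasDerivAt (fun s : ℝ => f (Lmap s p))
      (fderiv ℂ f (Lmap t p) ((p.1, 0) : ℂ × ℂ)) t := by
    have := ((hf (Lmap t p)).hasFDerivAt.restrictScalars ℝ).comp_hasDerivAt t hw
    simpa [Function.comp_def] using this
  have : HasDerivAt (fun s : ℝ => (s:ℂ) * f (Lmap s p)) _ t := hc.mul hfw
  convert this using 1
  have e1 : (((t:ℝ):ℂ), (0:ℂ)) = (t:ℂ) • ((1:ℂ), (0:ℂ)) := by simp
  have e2 : ((p.1 : ℂ), (0:ℂ)) = p.1 • ((1:ℂ), (0:ℂ)) := by simp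
  simp only [Fp', ContinuousLinearMap.add_apply, ContinuousLinearMap.smul_apply,
    ContinuousLinearMap.coe_comp', Function.comp_apply, Lmap_apply, e2,
    ContinuousLinearMap.coe_fst', smul_eq_mul]
  rw [(fderiv ℂ f ((t:ℂ) * p.1, p.2)).map_smul p.1]
  have e3 : ((t:ℂ) * 1, (0:ℂ)) = (t:ℂ) • ((1:ℂ), (0:ℂ)) := by simp
  rw [e3, (fderiv ℂ f ((t:ℂ) * p.1, p.2)).map_smul (t:ℂ)]
  simp only [smul_eq_mul]
  ring

theorem exists_entire_primitive_fst' (f : ℂ × ℂ → ℂ) (hf : Differentiable ℂ f) :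
    ∃ g : ℂ × ℂ → ℂ, Differentiable ℂ g ∧
      ∀ z : ℂ × ℂ, fderiv ℂ g z (1, 0) = f z := by
  refine ⟨fun x => ∫ t in (0:ℝ)..1, Fp f x t, fun p => ((key hf p).1.differentiableAt), ?_⟩
  intro p
  obtain ⟨hg, hint⟩ := key hf p
  rw [hg.fderiv]
  rw [ContinuousLinearMap.intervalIntegral_apply hint ((1:ℂ), (0:ℂ))]
  have hint' : IntervalIntegrable (fun t => Fp' f p t ((1:ℂ), (0:ℂ))) volume 0 1 := by
    rw [intervalIntegrable_iff] at hint ⊢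
    exact (ContinuousLinearMap.apply ℂ ℂ ((1:ℂ),(0:ℂ))).integrable_comp hint
  have := intervalIntegral.integral_eq_sub_of_hasDerivAt
    (f := fun s : ℝ => (s:ℂ) * f (Lmap s p)) (fun t _ => phi_deriv hf p t) hint'
  rw [this]
  simp [Lmap_apply]

end Auxiliary

/-- Every entire function on `ℂ × ℂ` is the first holomorphic partial derivative of
an entire function. -/
theorem exists_entire_primitive_fst (f : ℂ × ℂ → ℂ) (hf : Differentiable ℂ f) :
    ∃ g : ℂ × ℂ → ℂ, Differentiable ℂ g ∧ ∀ z : ℂ × ℂ, D0 g z = f z := by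
  obtain ⟨g, hg, hgf⟩ := exists_entire_primitive_fst' f hf
  exact ⟨g, hg, fun z => hgf z⟩
end

section
/- Identify ℂ⁵ with coordinates (u, v, z, w₁, w₂) and let U := {(u,v,z,w₁,w₂) ∈ ℂ⁵ : (v,w₁,w₂) ≠ 0}. Let Λ₅ := ExteriorAlgebra ℂ (Fin 5 → ℂ) with e₀,…,e₄ the images of the standard basis vectors, let Λ₃ := ExteriorAlgebra ℂ (Fin 3 → ℂ) with f₀, f₁, f₂ the images of the standard basis vectors, and set A := Λ₅ ⊗[ℂ] Λ₃. Define ρ(p)² := |v|² + |w₁|² + |w₂|² and F : U → A by F(p) := ρ(p)⁻⁶ • (e₀ * e₂) ⊗ (conj v • (f₁ * f₂) + conj w₁ • (f₂ * f₀) + conj w₂ • (f₀ * f₁)). Then for every p ∈ U: (i) ∂_u F(p) = 0, where ∂_u denotes the holomorphic Wirtinger derivative in the u-coordinate; and (ii) ∂_v F(p) * (e₀ ⊗ 1) = 0 in A, where ∂_v denotes the holomorphic Wirtinger derivative in the v-coordinate. Consequently (∂_u F(p)) * (e₁ ⊗ 1) + (∂_v F(p)) * (e₀ ⊗ 1) =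 0. -/
open scoped TensorProduct

set_option synthInstance.maxHeartbeats 1000000
set_option maxHeartbeats 1000000

/-- The exterior algebra `Λ₅` of `ℂ⁵`. -/
noncomputable abbrev Lam5 : Type := ExteriorAlgebra ℂ (Fin 5 → ℂ)

/-- The exterior algebra `Λ₃` of `ℂ³`. -/
noncomputable abbrev Lam3 : Type := ExteriorAlgebra ℂ (Fin 3 → ℂ)

/-- The algebra `A = Λ₅ ⊗[ℂ] Λ₃`. -/
noncomputable abbrev AA : Type := Lam5 ⊗[ℂ] Lam3

/-- The generators `e₀, …, e₄` of `Λ₅`. -/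
noncomputable def e (i : Fin 5) : Lam5 := ExteriorAlgebra.ι ℂ (Pi.single i 1)

/-- The generators `f₀, f₁, f₂` of `Λ₃`. -/
noncomputable def fg (j : Fin 3) : Lam3 := ExteriorAlgebra.ι ℂ (Pi.single j 1)

/-- `ρ(p)² = |v|² + |w₁|² + |w₂|²`, where `p = (u, v, z, w₁, w₂)`. -/
noncomputable def rho2 (p : Fin 5 → ℂ) : ℝ := ‖p 1‖ ^ 2 + ‖p 3‖ ^ 2 + ‖p 4‖ ^ 2

/-- The Bochner–Martinelli polyvector field sourced by D3 branes at `v = w₁ = w₂ = 0`: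
`F(p) = ρ(p)⁻⁶ • (e₀e₂) ⊗ (v̄ • f₁f₂ + w̄₁ • f₂f₀ + w̄₂ • f₀f₁)`. -/
noncomputable def BM (p : Fin 5 → ℂ) : AA :=
  ((rho2 p : ℂ) ^ 3)⁻¹ •
    ((e 0 * e 2) ⊗ₜ[ℂ]
      ((starRingEnd ℂ) (p 1) • (fg 1 * fg 2) + (starRingEnd ℂ) (p 3) • (fg 2 * fg 0) +
        (starRingEnd ℂ) (p 4) • (fg 0 * fg 1)))

/-- The holomorphic Wirtinger derivative in the `j`-th coordinate of a function on `ℂ⁵`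
with values in a complex normed vector space. -/
noncomputable def wirt {W : Type} [NormedAddCommGroup W] [NormedSpace ℂ W]
    (j : Fin 5) (F : (Fin 5 → ℂ) → W) (p : Fin 5 → ℂ) : W :=
  (2 : ℂ)⁻¹ •
    (fderiv ℝ F p (Pi.single j 1) - Complex.I • fderiv ℝ F p (Pi.single j Complex.I))

/- ## auxiliary definitions -/

/-- projection p ↦ (p 1, p 3, p 4) -/
noncomputable def projC : (Fin 5 → ℂ) →L[ℂ] ℂ × ℂ × ℂ :=
  (ContinuousLinearMap.proj 1).prod ((ContinuousLinearMap.proj 3).prod (ContinuousLinearMap.proj 4))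

noncomputable def G3 (q : ℂ × ℂ × ℂ) : ℂ × ℂ × ℂ :=
  (((‖q.1‖ ^ 2 + ‖q.2.1‖ ^ 2 + ‖q.2.2‖ ^ 2 : ℝ) : ℂ) ^ 3)⁻¹ •
    ((starRingEnd ℂ) q.1, (starRingEnd ℂ) q.2.1, (starRingEnd ℂ) q.2.2)

noncomputable def psiL : (ℂ × ℂ × ℂ) →ₗ[ℂ] Lam3 :=
  (LinearMap.toSpanSingleton ℂ Lam3 (fg 1 * fg 2)).comp (LinearMap.fst ℂ ℂ (ℂ × ℂ)) +
  (LinearMap.toSpanSingleton ℂ Lam3 (fg 2 * fg 0)).comp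
    ((LinearMap.fst ℂ ℂ ℂ).comp (LinearMap.snd ℂ ℂ (ℂ × ℂ))) +
  (LinearMap.toSpanSingleton ℂ Lam3 (fg 0 * fg 1)).comp
    ((LinearMap.snd ℂ ℂ ℂ).comp (LinearMap.snd ℂ ℂ (ℂ × ℂ)))

noncomputable def phiL : (ℂ × ℂ × ℂ) →ₗ[ℂ] AA :=
  (TensorProduct.mk ℂ Lam5 Lam3 (e 0 * e 2)).comp psiL

lemma phiL_apply (x : ℂ × ℂ × ℂ) :
    phiL x = (e 0 * e 2) ⊗ₜ[ℂ]
      (x.1 • (fg 1 * fg 2) + x.2.1 • (fg 2 * fg 0) + x.2.2 • (fg 0 * fg 1)) := by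
  simp [phiL, psiL, LinearMap.toSpanSingleton_apply, TensorProduct.mk_apply]

lemma e020 : e 0 * e 2 * e 0 = 0 := by
  have h := ExteriorAlgebra.ι_add_mul_swap (R := ℂ)
    (Pi.single 2 (1:ℂ) : Fin 5 → ℂ) (Pi.single 0 1)
  have h2 : e 2 * e 0 = -(e 0 * e 2) := by
    rw [eq_neg_iff_add_eq_zero]
    simpa [e] using h
  rw [mul_assoc, h2, mul_neg, ← mul_assoc]
  simp [e, ExteriorAlgebra.ι_sq_zero]

lemma phiL_mul (x : ℂ × ℂ × ℂ) : phiL x * ((e 0) ⊗ₜ[ℂ] (1 : Lam3)) = 0 := by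
  rw [phiL_apply, Algebra.TensorProduct.tmul_mul_tmul, e020, TensorProduct.zero_tmul]

lemma BM_eq (p : Fin 5 → ℂ) : BM p = phiL (G3 (projC p)) := by
  simp [BM, G3, projC, map_smul, phiL_apply, rho2, TensorProduct.tmul_add,
    TensorProduct.tmul_smul, smul_add, mul_smul]

lemma diffG3 {q : ℂ × ℂ × ℂ} (hq : (‖q.1‖ ^ 2 + ‖q.2.1‖ ^ 2 + ‖q.2.2‖ ^ 2 : ℝ) ≠ 0) :
    DifferentiableAt ℝ G3 q := by
  have h1 : DifferentiableAt ℝ (fun q : ℂ × ℂ × ℂ =>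
      (‖q.1‖ ^ 2 + ‖q.2.1‖ ^ 2 + ‖q.2.2‖ ^ 2 : ℝ)) q := by
    exact ((differentiableAt_fst.norm_sq ℂ).add
      ((differentiableAt_snd.fst.norm_sq ℂ))).add (differentiableAt_snd.snd.norm_sq ℂ)
  have h2 : DifferentiableAt ℝ (fun q : ℂ × ℂ × ℂ =>
      ((((‖q.1‖ ^ 2 + ‖q.2.1‖ ^ 2 + ‖q.2.2‖ ^ 2 : ℝ) : ℂ)) ^ 3)⁻¹) q := by
    apply DifferentiableAt.inv
    · exact (Complex.ofRealCLM.differentiableAt.comp q h1).pow 3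
    · exact pow_ne_zero 3 (by exact_mod_cast hq)
  have h3 : DifferentiableAt ℝ (fun q : ℂ × ℂ × ℂ =>
      (((starRingEnd ℂ) q.1, (starRingEnd ℂ) q.2.1, (starRingEnd ℂ) q.2.2) : ℂ × ℂ × ℂ)) q := by
    exact ((Complex.conjCLE.differentiable.differentiableAt).comp q differentiableAt_fst).prodMk
      (((Complex.conjCLE.differentiable.differentiableAt).comp q differentiableAt_snd.fst).prodMk
        ((Complex.conjCLE.differentiable.differentiableAt).comp q differentiableAt_snd.snd))
  exact h2.smul h3


lemma main_aux (nrm : AddGroupNorm AA)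
    (hnrm : ∀ (c : ℂ) (x : AA), nrm (c • x) = ‖c‖ * nrm x)
    (p : Fin 5 → ℂ) (hp : ¬(p 1 = 0 ∧ p 3 = 0 ∧ p 4 = 0)) :
    letI : NormedAddCommGroup AA := nrm.toNormedAddCommGroup
    letI : NormedSpace ℂ AA := ⟨fun c x => le_of_eq (hnrm c x)⟩
    wirt 0 BM p = 0 ∧
      wirt 1 BM p * ((e 0) ⊗ₜ[ℂ] (1 : Lam3)) = 0 ∧
      wirt 0 BM p * ((e 1) ⊗ₜ[ℂ] (1 : Lam3)) +
        wirt 1 BM p * ((e 0) ⊗ₜ[ℂ] (1 : Lam3)) = 0 := by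
  letI : NormedAddCommGroup AA := nrm.toNormedAddCommGroup
  letI : NormedSpace ℂ AA := ⟨fun c x => le_of_eq (hnrm c x)⟩
  letI : NormedSpace ℝ AA := NormedSpace.complexToReal
  letI : Module ℝ AA := NormedSpace.toModule
  have hne : p 1 ≠ 0 ∨ p 3 ≠ 0 ∨ p 4 ≠ 0 := by tauto
  have hq : (‖p 1‖ ^ 2 + ‖p 3‖ ^ 2 + ‖p 4‖ ^ 2 : ℝ) ≠ 0 := by
    rcases hne with h | h | h <;>
      nlinarith [pow_pos (norm_pos_iff.mpr h) 2, sq_nonneg ‖p 1‖, sq_nonneg ‖p 3‖,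
        sq_nonneg ‖p 4‖]
  have hG : DifferentiableAt ℝ G3 (projC p) := diffG3 (by exact hq)
  let φC : (ℂ × ℂ × ℂ) →L[ℂ] AA := LinearMap.toContinuousLinearMap phiL
  have hBM : BM = fun x => (φC.restrictScalars ℝ) (G3 ((projC.restrictScalars ℝ) x)) := by
    funext x
    exact BM_eq x
  have hD : HasFDerivAt BM
      ((φC.restrictScalars ℝ).comp ((fderiv ℝ G3 (projC p)).comp (projC.restrictScalars ℝ)))
      p := by
    rw [hBM]
    exact (φC.restrictScalars ℝ).hasFDerivAt.comp p
      (hG.hasFDerivAt.comp p (projC.restrictScalars ℝ).hasFDerivAt)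
  have hf : ∀ w, fderiv ℝ BM p w = phiL ((fderiv ℝ G3 (projC p)) (projC w)) := by
    intro w
    rw [hD.fderiv]
    rfl
  have h0 : ∀ c : ℂ, (fderiv ℝ BM p) (Pi.single 0 c) = 0 := by
    intro c
    rw [hf]
    have hz : projC (Pi.single 0 c) = 0 := by
      simp [projC, Pi.single_eq_of_ne (by decide : (1 : Fin 5) ≠ 0),
        Pi.single_eq_of_ne (by decide : (3 : Fin 5) ≠ 0),
        Pi.single_eq_of_ne (by decide : (4 : Fin 5) ≠ 0), Prod.ext_iff]
    rw [hz, map_zero, map_zero]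
  have part1 : wirt 0 BM p = 0 := by
    simp [wirt, h0]
  have part2 : wirt 1 BM p * ((e 0) ⊗ₜ[ℂ] (1 : Lam3)) = 0 := by
    have hw : wirt 1 BM p = phiL ((2 : ℂ)⁻¹ •
        ((fderiv ℝ G3 (projC p)) (projC (Pi.single 1 1)) -
          Complex.I • (fderiv ℝ G3 (projC p)) (projC (Pi.single 1 Complex.I)))) := by
      rw [wirt, hf, hf, map_smul, map_sub, map_smul]
    rw [hw, phiL_mul]
  exact ⟨part1, part2, by rw [part1, part2, zero_mul, add_zero]⟩

/-- On `U = {(u,v,z,w₁,w₂) : (v,w₁,w₂) ≠ 0}`: the Bochner–Martinelli field `F` sourced by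
D3 branes satisfies `∂_u F(p) = 0`, `∂_v F(p) * (e₀ ⊗ 1) = 0`, and consequently
`(∂_u F(p)) * (e₁ ⊗ 1) + (∂_v F(p)) * (e₀ ⊗ 1) = 0`, i.e. `F` is annihilated by
`[∂_u ∧ ∂_v, −]`. -/
theorem bm_field_annihilated (nrm : AddGroupNorm AA)
    (hnrm : ∀ (c : ℂ) (x : AA), nrm (c • x) = ‖c‖ * nrm x)
    (p : Fin 5 → ℂ) (hp : ¬(p 1 = 0 ∧ p 3 = 0 ∧ p 4 = 0)) :
    letI : NormedAddCommGroup AA := nrm.toNormedAddCommGroup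
    letI : NormedSpace ℂ AA := ⟨fun c x => le_of_eq (hnrm c x)⟩
    wirt 0 BM p = 0 ∧
      wirt 1 BM p * ((e 0) ⊗ₜ[ℂ] (1 : Lam3)) = 0 ∧
      wirt 0 BM p * ((e 1) ⊗ₜ[ℂ] (1 : Lam3)) +
        wirt 1 BM p * ((e 0) ⊗ₜ[ℂ] (1 : Lam3)) = 0 :=
  main_aux nrm hnrm p hp
end
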